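/- Let d, k, n ≥ 2, and let (i_1,…,i_n;j) and (i′_1,…,i′_n;j′) be two distinct elements of {2,…,k}^n × {0,1,…,n−1} satisfying i_1 + ⋯ + i_n − j = i′_1 + ⋯ + i′_n − j′. Then the closure of A_{i_1,…,i_n;j} in F(ℝ^d,k)^n is disjoint from A_{i′_1,…,i′_n;j′}. -/

import Mathlib

lemma range_ncard_ge_isOpen {X Y : Type*} [TopologicalSpace X] [TopologicalSpace Y]
    [T2Space Y] {k : ℕ} {f : X → Fin k → Y} (hf : Continuous f) (m : ℕ) :
    IsOpen {x | m ≤ (Set.range (f x)).ncard} := by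
  classical
  have key : {x | m ≤ (Set.range (f x)).ncard} =
      ⋃ g : Fin m → Fin k, {x | ∀ a b : Fin m, a ≠ b → f x (g a) ≠ f x (g b)} := by
    ext x
    simp only [Set.mem_setOf_eq, Set.mem_iUnion]
    constructor
    · intro hx
      obtain ⟨t, hts, htc⟩ := Set.exists_subset_card_eq hx
      have htf : t.Finite := (Set.finite_range (f x)).subset hts
      have hcard : htf.toFinset.card = m := by
        rw [← Set.ncard_eq_toFinset_card t htf]; exact htc
      let e : Fin m ≃ htf.toFinset := (Finset.equivFinOfCardEq hcard).symm
      have hmem : ∀ a : Fin m, ((e a : Y) ∈ Set.range (f x)) := by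
        intro a
        apply hts
        have h2 := (e a).2
        rw [Set.Finite.mem_toFinset] at h2
        exact h2
      choose g hg using fun a => hmem a
      refine ⟨g, fun a b hab h => hab ?_⟩
      apply e.injective
      apply Subtype.ext
      rw [← hg a, ← hg b, h]
    · rintro ⟨g, hg⟩
      have hinj : Function.Injective (fun a : Fin m => f x (g a)) := by
        intro a b hab
        by_contra h
        exact hg a b h hab
      have h1 : (Set.range fun a : Fin m => f x (g a)).ncard = m := by
        rw [Set.ncard_eq_toFinset_card', Set.toFinset_range]
        rw [Finset.card_image_of_injective _ hinj, Finset.card_univ, Fintype.card_fin]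
      calc m = (Set.range fun a : Fin m => f x (g a)).ncard := h1.symm
        _ ≤ (Set.range (f x)).ncard := by
            apply Set.ncard_le_ncard _ (Set.finite_range (f x))
            rintro y ⟨a, rfl⟩
            exact ⟨g a, rfl⟩
  rw [key]
  apply isOpen_iUnion
  intro g
  have : {x | ∀ a b : Fin m, a ≠ b → f x (g a) ≠ f x (g b)} =
      ⋂ a : Fin m, ⋂ b : Fin m, {x | a ≠ b → f x (g a) ≠ f x (g b)} := by
    ext x; simp
  rw [this]
  apply isOpen_iInter_of_finite
  intro a
  apply isOpen_iInter_of_finite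
  intro b
  by_cases hab : a = b
  · simp [hab]
  · have : {x | a ≠ b → f x (g a) ≠ f x (g b)} = {x | f x (g a) = f x (g b)}ᶜ := by
      ext x; simp [hab]
    rw [this]
    exact (isClosed_eq ((continuous_apply (g a)).comp hf)
      ((continuous_apply (g b)).comp hf)).isOpen_compl

lemma count_ge_isClosed {X : Type*} [TopologicalSpace X] {n : ℕ}
    {P : Fin n → X → Prop} (h : ∀ s, IsClosed {x | P s x}) (j : ℕ) :
    IsClosed {x | j ≤ {s | P s x}.ncard} := by
  classical
  have key : {x | j ≤ {s | P s x}.ncard} =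
      ⋃ S ∈ {S : Finset (Fin n) | S.card = j}, ⋂ s ∈ S, {x | P s x} := by
    ext x
    simp only [Set.mem_setOf_eq, Set.mem_iUnion, Set.mem_iInter]
    constructor
    · intro hx
      obtain ⟨t, hts, htc⟩ := Set.exists_subset_card_eq hx
      have htf : t.Finite := Set.toFinite t
      refine ⟨htf.toFinset, ?_, fun s hs => hts (by simpa using hs)⟩
      rw [← Set.ncard_eq_toFinset_card t htf]; exact htc
    · rintro ⟨S, hS, hP⟩
      calc j = S.card := hS.symm
        _ = (S : Set (Fin n)).ncard := (Set.ncard_coe_finset S).symm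
        _ ≤ {s | P s x}.ncard := Set.ncard_le_ncard (fun s hs => hP s hs) (Set.toFinite _)
  rw [key]
  apply Set.Finite.isClosed_biUnion (Set.toFinite _)
  intro S _
  apply isClosed_biInter
  intro s _
  exact h s


open unitInterval

noncomputable section

/-- Euclidean space ℝ^d. -/
abbrev E (d : ℕ) : Type := EuclideanSpace ℝ (Fin d)

/-- The ordered configuration space F(ℝ^d, k) of k distinct points in ℝ^d,
viewed as the subspace of (ℝ^d)^k of injective tuples. -/
def Conf (d k : ℕ) : Set (Fin k → E d) := {x | Function.Injective x}

/-- The time i/(n-1) ∈ [0,1] at which the i-th configuration is visited. -/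
def eTime (n : ℕ) (i : Fin n) : unitInterval :=
  Set.projIcc 0 1 zero_le_one ((i : ℝ) / ((n : ℝ) - 1))

/-- The evaluation map e_n : P(X) → X^n,
e_n(γ) = (γ(0), γ(1/(n-1)), …, γ((n-2)/(n-1)), γ(1)). -/
def evalMap {X : Type*} [TopologicalSpace X] (n : ℕ) (γ : C(unitInterval, X)) : Fin n → X :=
  fun i => γ (eTime n i)

/-- `A ⊆ X^n` admits a continuous section of the evaluation map e_n. -/
def HasSec {X : Type*} [TopologicalSpace X] (n : ℕ) (A : Set (Fin n → X)) : Prop :=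
  ∃ s : A → C(unitInterval, X), Continuous s ∧ ∀ a : A, evalMap n (s a) = (a : Fin n → X)

/-- The orienting unit vector e_C = (x_2 - x_1)/|x_2 - x_1| of the line L_C
through x_1 and x_2. -/
def eV {d k : ℕ} (hk : 2 ≤ k) (C : Fin k → E d) : E d :=
  ‖C ⟨1, by omega⟩ - C ⟨0, by omega⟩‖⁻¹ • (C ⟨1, by omega⟩ - C ⟨0, by omega⟩)

/-- The orthogonal projection p_C : ℝ^d → L_C onto the affine line L_C
through x_1 and x_2. -/
def pC {d k : ℕ} (hk : 2 ≤ k) (C : Fin k → E d) (x : E d) : E d :=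
  C ⟨0, by omega⟩ + (inner ℝ (x - C ⟨0, by omega⟩) (eV hk C) : ℝ) • eV hk C

/-- c̄p(C) = cardinality of {p_C(x_1),…,p_C(x_k)}. -/
def cpBar {d k : ℕ} (hk : 2 ≤ k) (C : Fin k → E d) : ℕ :=
  (Set.range fun i => pC hk C (C i)).ncard

/-- The set A_{i_1,…,i_n;j} of n-tuples (C_1,…,C_n) ∈ F(ℝ^d,k)^n with
c̄p(C_s) = i_s for all s and exactly j of the vectors e_{C_1},…,e_{C_n} equal
-e_{C_1}. -/
def Atup (d k n : ℕ) (hk : 2 ≤ k) (hn : 2 ≤ n) (iv : Fin n → ℕ) (j : ℕ) :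
    Set (Fin n → ↥(Conf d k)) :=
  {C | (∀ s : Fin n, cpBar hk ((C s : Fin k → E d)) = iv s) ∧
    {s : Fin n | eV hk ((C s : Fin k → E d)) =
      -eV hk ((C ⟨0, by omega⟩ : Fin k → E d))}.ncard = j}

lemma sub01_ne {d k : ℕ} (hk : 2 ≤ k) (C : ↥(Conf d k)) :
    (C : Fin k → E d) ⟨1, by omega⟩ - (C : Fin k → E d) ⟨0, by omega⟩ ≠ 0 := by
  rw [sub_ne_zero]
  intro h
  have := C.2 h
  simp [Fin.ext_iff] at this

lemma continuous_eV {d k : ℕ} (hk : 2 ≤ k) :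
    Continuous (fun C : ↥(Conf d k) => eV hk (C : Fin k → E d)) := by
  have hsub : Continuous (fun C : ↥(Conf d k) =>
      (C : Fin k → E d) ⟨1, by omega⟩ - (C : Fin k → E d) ⟨0, by omega⟩) :=
    ((continuous_apply _).comp continuous_subtype_val).sub
      ((continuous_apply _).comp continuous_subtype_val)
  exact (hsub.norm.inv₀ (fun C => norm_ne_zero_iff.2 (sub01_ne hk C))).smul hsub

lemma continuous_pCfun {d k : ℕ} (hk : 2 ≤ k) :
    Continuous (fun C : ↥(Conf d k) => fun i => pC hk (C : Fin k → E d) ((C : Fin k → E d) i)) := by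
  apply continuous_pi
  intro i
  unfold pC
  have h0 : Continuous (fun C : ↥(Conf d k) => (C : Fin k → E d) ⟨0, by omega⟩) :=
    (continuous_apply _).comp continuous_subtype_val
  have hi : Continuous (fun C : ↥(Conf d k) => (C : Fin k → E d) i) :=
    (continuous_apply _).comp continuous_subtype_val
  have hinner : Continuous (fun C : ↥(Conf d k) =>
      (inner ℝ ((C : Fin k → E d) i - (C : Fin k → E d) ⟨0, by omega⟩)
        (eV hk (C : Fin k → E d)) : ℝ)) :=
    Continuous.inner (hi.sub h0) (continuous_eV hk)
  exact h0.add (hinner.smul (continuous_eV hk))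

/-- For d, k, n ≥ 2 and distinct labels (i_1,…,i_n;j) ≠
(i'_1,…,i'_n;j') in {2,…,k}^n × {0,…,n-1} with i_1+⋯+i_n - j =
i'_1+⋯+i'_n - j', the closure of A_{i_1,…,i_n;j} in F(ℝ^d,k)^n is disjoint
from A_{i'_1,…,i'_n;j'}. -/
theorem stmt18 (d k n : ℕ) (hd : 2 ≤ d) (hk : 2 ≤ k) (hn : 2 ≤ n)
    (iv iv' : Fin n → ℕ) (j j' : ℕ)
    (hiv : ∀ s, 2 ≤ iv s ∧ iv s ≤ k) (hiv' : ∀ s, 2 ≤ iv' s ∧ iv' s ≤ k)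
    (hj : j ≤ n - 1) (hj' : j' ≤ n - 1)
    (hne : (iv, j) ≠ (iv', j'))
    (hsum : (∑ s, (iv s : ℤ)) - (j : ℤ) = (∑ s, (iv' s : ℤ)) - (j' : ℤ)) :
    closure (Atup d k n hk hn iv j) ∩ Atup d k n hk hn iv' j' = ∅ := by
  set B : Set (Fin n → ↥(Conf d k)) :=
    {C | (∀ s, cpBar hk ((C s : Fin k → E d)) ≤ iv s) ∧
      j ≤ {s : Fin n | eV hk ((C s : Fin k → E d)) =
        -eV hk ((C ⟨0, by omega⟩ : Fin k → E d))}.ncard} with hBdef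
  have hBclosed : IsClosed B := by
    have h1 : ∀ s : Fin n, IsClosed
        {C : Fin n → ↥(Conf d k) | cpBar hk ((C s : Fin k → E d)) ≤ iv s} := by
      intro s
      have heq : {C : Fin n → ↥(Conf d k) | cpBar hk ((C s : Fin k → E d)) ≤ iv s} =
          {C : Fin n → ↥(Conf d k) | iv s + 1 ≤
            (Set.range fun i => pC hk ((C s : Fin k → E d)) ((C s : Fin k → E d) i)).ncard}ᶜ := by
        ext C
        simp only [Set.mem_setOf_eq, Set.mem_compl_iff, not_le, cpBar]
        omega
      rw [heq]
      exact (range_ncard_ge_isOpen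
        ((continuous_pCfun hk).comp (continuous_apply s)) _).isClosed_compl
    have h2 : IsClosed {C : Fin n → ↥(Conf d k) |
        j ≤ {s : Fin n | eV hk ((C s : Fin k → E d)) =
          -eV hk ((C ⟨0, by omega⟩ : Fin k → E d))}.ncard} := by
      apply count_ge_isClosed
      intro s
      exact isClosed_eq ((continuous_eV hk).comp (continuous_apply s))
        (((continuous_eV hk).comp (continuous_apply (⟨0, by omega⟩ : Fin n))).neg)
    have hBeq : B = (⋂ s : Fin n,
        {C : Fin n → ↥(Conf d k) | cpBar hk ((C s : Fin k → E d)) ≤ iv s}) ∩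
        {C : Fin n → ↥(Conf d k) | j ≤ {s : Fin n | eV hk ((C s : Fin k → E d)) =
          -eV hk ((C ⟨0, by omega⟩ : Fin k → E d))}.ncard} := by
      ext C
      simp only [hBdef, Set.mem_setOf_eq, Set.mem_inter_iff, Set.mem_iInter]
    rw [hBeq]
    exact (isClosed_iInter h1).inter h2
  have hAB : Atup d k n hk hn iv j ⊆ B := by
    rintro C ⟨h1, h2⟩
    exact ⟨fun s => (h1 s).le, h2.ge⟩
  rw [Set.eq_empty_iff_forall_notMem]
  rintro C ⟨hc, hcp', hcount'⟩
  obtain ⟨hcp, hcount⟩ := closure_minimal hAB hBclosed hc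
  have hle : ∀ s, iv' s ≤ iv s := fun s => (hcp' s) ▸ hcp s
  have hjle : j ≤ j' := hcount' ▸ hcount
  have hsums : (∑ s, (iv' s : ℤ)) ≤ ∑ s, (iv s : ℤ) :=
    Finset.sum_le_sum fun s _ => by exact_mod_cast hle s
  have hjj : j = j' := by omega
  have hsumeq : (∑ s, iv' s) = ∑ s, iv s := by
    have : (∑ s, (iv' s : ℤ)) = ∑ s, (iv s : ℤ) := by omega
    exact_mod_cast this
  have hiveq : ∀ s ∈ Finset.univ, iv' s = iv s :=
    (Finset.sum_eq_sum_iff_of_le fun s _ => hle s).1 hsumeq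
  apply hne
  exact Prod.ext (funext fun s => (hiveq s (Finset.mem_univ s)).symm) hjj
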